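/- (Replication Lemma, converse direction.) If a state p occurs at infinitely many pairwise incomparable nodes of an accepting run of a deterministic parity tree automaton with finite state set Q, then p is replicated by an accepting loop: there exists a state q lying on an accepting loop of the automaton and a path from q to p branching off that loop. -/

import Mathlib

/-- One-step transition relation of a deterministic tree automaton. -/
def Step {Q A : Type*} (δ : Q → A → Fin 2 → Q) (p q : Q) : Prop := ∃ σ d, δ p σ d = q

/-- `ρ` is a run of the automaton `δ` on the input tree `t` (starting from an
arbitrary chosen state at the root). -/
def IsRun {Q A : Type*} (δ : Q → A → Fin 2 → Q) (t : List (Fin 2) → A)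
    (ρ : List (Fin 2) → Q) : Prop :=
  ∀ v d, ρ (v ++ [d]) = δ (ρ v) (t v) d

/-- The node at depth `n` on the branch `b` of the full binary tree. -/
def node2 (b : ℕ → Fin 2) (n : ℕ) : List (Fin 2) := List.ofFn fun i : Fin n => b i

/-- `r` occurs infinitely often in the sequence `f`. -/
def InfOcc (f : ℕ → ℕ) (r : ℕ) : Prop := ∀ m, ∃ n, m ≤ n ∧ f n = r

/-- The parity condition on one branch: the highest rank occurring infinitely
often is even. -/
def AcceptingBranch (f : ℕ → ℕ) : Prop :=
  ∃ r, Even r ∧ InfOcc f r ∧ ∀ r', InfOcc f r' → r' ≤ r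

/-- A run is accepting if every infinite branch satisfies the parity condition. -/
def Accepting {Q : Type*} (rank : Q → ℕ) (ρ : List (Fin 2) → Q) : Prop :=
  ∀ b : ℕ → Fin 2, AcceptingBranch fun n => rank (ρ (node2 b n))

/-- A state is productive if it occurs in some accepting run. -/
def Productive {Q A : Type*} (δ : Q → A → Fin 2 → Q) (rank : Q → ℕ) (p : Q) : Prop :=
  ∃ t ρ, IsRun δ t ρ ∧ Accepting rank ρ ∧ ∃ v, ρ v = p

/-- A loop (cycle) in the automaton, presented as an `m`-periodic sequence of
states connected by transitions. -/
def IsCycle {Q A : Type*} (δ : Q → A → Fin 2 → Q) (c : ℕ → Q) (m : ℕ) : Prop :=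
  0 < m ∧ (∀ n, c (n + m) = c n) ∧ ∀ n, Step δ (c n) (c (n + 1))

/-- The maximal rank on the loop `c` is even (the loop is accepting). -/
def MaxRankEven {Q : Type*} (rank : Q → ℕ) (c : ℕ → Q) : Prop :=
  ∃ r, Even r ∧ (∃ n, rank (c n) = r) ∧ ∀ n, rank (c n) ≤ r

/-- The maximal rank on the loop `c` is odd (the loop is rejecting). -/
def MaxRankOdd {Q : Type*} (rank : Q → ℕ) (c : ℕ → Q) : Prop :=
  ∃ r, Odd r ∧ (∃ n, rank (c n) = r) ∧ ∀ n, rank (c n) ≤ r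

/-- Reachability along transitions. -/
def Reaches {Q A : Type*} (δ : Q → A → Fin 2 → Q) : Q → Q → Prop :=
  Relation.ReflTransGen (Step δ)

/-- `p` is replicated by an accepting loop: there is an accepting loop `c`, whose
transition at `c 0` reads `σ` in direction `d₀`, and a path starting with the
transition on `(σ, d₁)`, `d₁ ≠ d₀`, leading from `c 0` to `p`. -/
def ReplicatedByAccLoop {Q A : Type*} (δ : Q → A → Fin 2 → Q) (rank : Q → ℕ)
    (p : Q) : Prop :=
  ∃ (c : ℕ → Q) (m : ℕ) (σ : A) (d₀ d₁ : Fin 2),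
    IsCycle δ c m ∧ MaxRankEven rank c ∧ δ (c 0) σ d₀ = c 1 ∧ d₀ ≠ d₁ ∧
      Reaches δ (δ (c 0) σ d₁) p

section Aux

variable {Q A : Type*}

lemma node2_succ (b : ℕ → Fin 2) (n : ℕ) : node2 b (n + 1) = node2 b n ++ [b n] := by
  simp only [node2, List.ofFn_succ', List.concat_eq_append, Fin.coe_castSucc, Fin.val_last]

lemma node2_length (b : ℕ → Fin 2) (n : ℕ) : (node2 b n).length = n := by
  simp [node2]

lemma node2_mono (b : ℕ → Fin 2) (m k : ℕ) : node2 b m <+: node2 b (m + k) := by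
  induction k with
  | zero => exact List.prefix_refl _
  | succ k ih =>
    rw [show m + (k + 1) = (m + k) + 1 from rfl, node2_succ]
    exact ih.trans (List.prefix_append _ _)

lemma run_reaches (δ : Q → A → Fin 2 → Q) {t : List (Fin 2) → A} {ρ : List (Fin 2) → Q}
    (hrun : IsRun δ t ρ) (w tail : List (Fin 2)) :
    Reaches δ (ρ w) (ρ (w ++ tail)) := by
  induction tail using List.reverseRecOn with
  | nil => rw [List.append_nil]; exact Relation.ReflTransGen.refl
  | append_singleton tail d ih =>
    rw [← List.append_assoc]
    exact ih.tail ⟨t (w ++ tail), d, (hrun _ _).symm⟩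

lemma fiber_infinite [Finite Q] {s : Set ℕ} (hs : s.Infinite) (g : ℕ → Q) :
    ∃ q, {n | n ∈ s ∧ g n = q}.Infinite := by
  by_contra h
  push_neg at h
  have hsub : s ⊆ ⋃ q, {n | n ∈ s ∧ g n = q} := fun n hn => Set.mem_iUnion.mpr ⟨g n, hn, rfl⟩
  exact hs ((Set.finite_iUnion fun q => (h q)).subset hsub)

lemma exists_branch (v : ℕ → List (Fin 2))
    (h : ∀ u : List (Fin 2), ({i | u <+: v i} : Set ℕ).Infinite →
      ∃ d, ({i | u ++ [d] <+: v i} : Set ℕ).Infinite) :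
    ∃ b : ℕ → Fin 2, ∀ n, ({i | node2 b n <+: v i} : Set ℕ).Infinite := by
  have h0 : ({i | [] <+: v i} : Set ℕ).Infinite :=
    Set.Infinite.mono (fun i _ => List.nil_prefix) Set.infinite_univ
  let P : List (Fin 2) → Prop := fun u => ({i | u <+: v i} : Set ℕ).Infinite
  let seq : ℕ → {u // P u} := fun n =>
    Nat.rec ⟨[], h0⟩ (fun _ p => ⟨p.1 ++ [(h p.1 p.2).choose], (h p.1 p.2).choose_spec⟩) n
  refine ⟨fun n => (h (seq n).1 (seq n).2).choose, ?_⟩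
  have key : ∀ n, node2 (fun n => (h (seq n).1 (seq n).2).choose) n = (seq n).1 := by
    intro n
    induction n with
    | zero => simp [node2]; rfl
    | succ n ih => rw [node2_succ, ih]
  intro n
  rw [key]
  exact (seq n).2

end Aux

/-- Replication Lemma, converse direction: if a state `p` occurs at infinitely
many pairwise incomparable nodes of an accepting run, then `p` is replicated by
an accepting loop. -/
theorem replication_lemma_converse {Q A : Type*} [Fintype Q]
    (δ : Q → A → Fin 2 → Q) (rank : Q → ℕ) (p : Q)
    (t : List (Fin 2) → A) (ρ : List (Fin 2) → Q)
    (hrun : IsRun δ t ρ) (hacc : Accepting rank ρ)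
    (v : ℕ → List (Fin 2)) (hinc : ∀ i j, i ≠ j → ¬ v i <+: v j)
    (hv : ∀ i, ρ (v i) = p) :
    ReplicatedByAccLoop δ rank p := by
  classical
  have hvne : ∀ i j, i ≠ j → v i ≠ v j := fun i j hij h => hinc i j hij (h ▸ List.prefix_refl _)
  -- step lemma for branch construction
  have hstep : ∀ u : List (Fin 2), ({i | u <+: v i} : Set ℕ).Infinite →
      ∃ d, ({i | u ++ [d] <+: v i} : Set ℕ).Infinite := by
    intro u hu
    by_contra hcon
    push_neg at hcon
    have hsub : {i | u <+: v i} ⊆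
        {i | v i = u} ∪ ({i | u ++ [0] <+: v i} ∪ {i | u ++ [1] <+: v i}) := by
      intro i hi
      obtain ⟨tl, htl⟩ := hi
      cases tl with
      | nil => left; simp only [Set.mem_setOf_eq]; rw [← htl, List.append_nil]
      | cons d rest =>
        right
        have hd : u ++ [d] <+: v i := ⟨rest, by rw [← htl]; simp⟩
        fin_cases d
        · left; exact hd
        · right; exact hd
    have hfin1 : ({i | v i = u} : Set ℕ).Finite := by
      apply Set.Subsingleton.finite
      intro i hi j hj
      by_contra hij
      exact hvne i j hij (hi.trans hj.symm)
    exact hu ((hfin1.union ((hcon 0).union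
      (hcon 1))).subset hsub)
  obtain ⟨b, hb⟩ := exists_branch v hstep
  have hrho : ∀ n, ρ (node2 b (n + 1)) = δ (ρ (node2 b n)) (t (node2 b n)) (b n) := by
    intro n; rw [node2_succ]; exact hrun _ _
  have stepBranch : ∀ j, Step δ (ρ (node2 b j)) (ρ (node2 b (j + 1))) :=
    fun j => ⟨t (node2 b j), b j, (hrho j).symm⟩
  -- branch points are dense along the branch
  have hbp : ∀ N, ∃ n, N ≤ n ∧ ∃ i d, d ≠ b n ∧ node2 b n ++ [d] <+: v i := by
    intro N
    by_contra hcon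
    push_neg at hcon
    have honbr : ∀ k i n, N ≤ n → node2 b n <+: v i → (v i).length ≤ n + k →
        ∃ m, v i = node2 b m := by
      intro k
      induction k with
      | zero =>
        intro i n hN hpre hlen
        refine ⟨n, ?_⟩
        have h1 := node2_length b n
        have h2 := hpre.length_le
        exact (hpre.eq_of_length (by omega)).symm
      | succ k ih =>
        intro i n hN hpre hlen
        obtain ⟨tl, htl⟩ := hpre
        cases tl with
        | nil => exact ⟨n, by rw [← htl, List.append_nil]⟩
        | cons d rest =>
          have hd2 : node2 b n ++ [d] <+: v i := ⟨rest, by rw [← htl]; simp⟩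
          have hdb : d = b n := by
            by_contra hne
            exact hcon n hN i d hne hd2
          refine ih i (n + 1) (by omega) ?_ (by omega)
          rw [node2_succ, ← hdb]
          exact hd2
    obtain ⟨i, hi, j, hj, hij⟩ := (hb N).nontrivial
    obtain ⟨mi, hmi⟩ := honbr (v i).length i N le_rfl hi (by omega)
    obtain ⟨mj, hmj⟩ := honbr (v j).length j N le_rfl hj (by omega)
    rcases le_total mi mj with h | h
    · apply hinc i j hij
      rw [hmi, hmj]
      have h3 := node2_mono b mi (mj - mi)
      rwa [show mi + (mj - mi) = mj from by omega] at h3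
    · apply hinc j i (Ne.symm hij)
      rw [hmi, hmj]
      have h3 := node2_mono b mj (mi - mj)
      rwa [show mj + (mi - mj) = mi from by omega] at h3
  -- the accepting condition along the branch
  obtain ⟨r, hre, hrinf, hrmax⟩ := hacc b
  -- beyond some point, all ranks are ≤ r
  have hhigh : {n | r < rank (ρ (node2 b n))}.Finite := by
    by_contra hfin
    have hfin2 : ({n | r < rank (ρ (node2 b n))} : Set ℕ).Infinite := hfin
    obtain ⟨q, hq⟩ := fiber_infinite hfin2 (fun n => ρ (node2 b n))
    have h1 : InfOcc (fun n => rank (ρ (node2 b n))) (rank q) := by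
      intro m
      obtain ⟨n, hn, hgt⟩ := hq.exists_gt m
      exact ⟨n, le_of_lt hgt, show rank (ρ (node2 b n)) = rank q by rw [hn.2]⟩
    have h2 := hrmax _ h1
    obtain ⟨n, hn⟩ := hq.nonempty
    have h3 : r < rank (ρ (node2 b n)) := hn.1
    rw [hn.2] at h3
    omega
  obtain ⟨N0, hN0⟩ := hhigh.bddAbove
  have hle : ∀ n, N0 + 1 ≤ n → rank (ρ (node2 b n)) ≤ r := by
    intro n hn
    by_contra hgt
    push_neg at hgt
    have := hN0 (Set.mem_setOf_eq ▸ hgt : n ∈ {n | r < rank (ρ (node2 b n))})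
    omega
  -- pigeonhole on states at branch points
  have hBinf : ({n | ∃ i d, d ≠ b n ∧ node2 b n ++ [d] <+: v i} : Set ℕ).Infinite := by
    apply Set.infinite_of_not_bddAbove
    rintro ⟨x, hx⟩
    obtain ⟨n, hn1, hn2⟩ := hbp (x + 1)
    have := hx hn2
    omega
  obtain ⟨q, hq⟩ := fiber_infinite hBinf (fun n => ρ (node2 b n))
  -- choose n1 < m < n2
  obtain ⟨n1, hn1mem, hn1gt⟩ := hq.exists_gt N0
  obtain ⟨m, hmge, hmrank⟩ := hrinf (n1 + 1)
  obtain ⟨n2, hn2mem, hn2gt⟩ := hq.exists_gt m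
  have hM : 0 < n2 - n1 := by omega
  have hqq : ρ (node2 b (n1 + (n2 - n1))) = ρ (node2 b n1) := by
    rw [show n1 + (n2 - n1) = n2 from by omega, hn2mem.2, hn1mem.2]
  refine ⟨fun k => ρ (node2 b (n1 + k % (n2 - n1))), n2 - n1, t (node2 b n1), b n1, ?_⟩
  obtain ⟨i, d₁, hd₁, hpre⟩ := hn1mem.1
  refine ⟨d₁, ⟨hM, fun k => by simp [Nat.add_mod_right], ?_⟩, ?_, ?_, ?_, ?_⟩
  · -- cycle steps
    intro k
    have hj : k % (n2 - n1) < n2 - n1 := Nat.mod_lt _ hM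
    have h1 : (k + 1) % (n2 - n1) = (k % (n2 - n1) + 1) % (n2 - n1) :=
      (Nat.mod_add_mod k (n2 - n1) 1).symm
    show Step δ (ρ (node2 b (n1 + k % (n2 - n1)))) (ρ (node2 b (n1 + (k + 1) % (n2 - n1))))
    by_cases hcase : k % (n2 - n1) + 1 < n2 - n1
    · have h2 : (k + 1) % (n2 - n1) = k % (n2 - n1) + 1 := by
        rw [h1]; exact Nat.mod_eq_of_lt hcase
      rw [h2, ← Nat.add_assoc]
      exact stepBranch _
    · have hM1 : k % (n2 - n1) + 1 = n2 - n1 := by omega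
      have h2 : (k + 1) % (n2 - n1) = 0 := by rw [h1, hM1, Nat.mod_self]
      have h3 : ρ (node2 b (n1 + (k + 1) % (n2 - n1))) = ρ (node2 b (n1 + k % (n2 - n1) + 1)) := by
        rw [h2, Nat.add_zero, ← hqq]
        congr 2
        omega
      rw [h3]
      exact stepBranch _
  · -- MaxRankEven
    refine ⟨r, hre, ⟨m - n1, ?_⟩, ?_⟩
    · show rank (ρ (node2 b (n1 + (m - n1) % (n2 - n1)))) = r
      rw [Nat.mod_eq_of_lt (by omega), show n1 + (m - n1) = m from by omega]
      exact hmrank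
    · intro k
      exact hle _ (by have := Nat.mod_lt k hM; omega)
  · -- δ (c 0) σ d₀ = c 1
    show δ (ρ (node2 b (n1 + 0 % (n2 - n1)))) (t (node2 b n1)) (b n1)
        = ρ (node2 b (n1 + 1 % (n2 - n1)))
    rw [Nat.zero_mod, Nat.add_zero, Nat.mod_eq_of_lt (by omega)]
    exact (hrho n1).symm
  · exact fun h => hd₁ h.symm
  · -- Reaches
    show Reaches δ (δ (ρ (node2 b (n1 + 0 % (n2 - n1)))) (t (node2 b n1)) d₁) p
    rw [Nat.zero_mod, Nat.add_zero, ← hrun (node2 b n1) d₁]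
    obtain ⟨tl, htl⟩ := hpre
    rw [← hv i, ← htl]
    exact run_reaches δ hrun _ _
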